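/- Let X be a path-connected H-SLT space with H ≤ π₁(X,x₀) locally quasinormal. Then for every path α from x₀, if X is homotopically Hausdorff relative to H_α = [ᾱHα], then X is homotopically path Hausdorff relative to H_α. -/

import Mathlib

open CategoryTheory Topology
open scoped Pointwise

noncomputable section
namespace Paper

variable {X : Type*} [TopologicalSpace X]

attribute [local instance] Path.Homotopic.setoid

/-- The homotopy class of a loop as an element of the fundamental group. -/
def loopClass {x : X} (γ : Path x x) : FundamentalGroup X x :=
  (⟦γ⟧ : FundamentalGroupoid.mk x ⟶ FundamentalGroupoid.mk x)

/-- Conjugation of the fundamental group along a path: `h ↦ [ᾱ ∗ h ∗ α]`. -/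
def pathConj {x₀ x : X} (α : Path x₀ x) :
    FundamentalGroup X x₀ ≃* FundamentalGroup X x :=
  FundamentalGroup.fundamentalGroupMulEquivOfPath α

/-- The path-conjugate subgroup `H_α = [ᾱ H α]`. -/
def conjSubgroup {x₀ x : X} (H : Subgroup (FundamentalGroup X x₀)) (α : Path x₀ x) :
    Subgroup (FundamentalGroup X x) :=
  H.map (pathConj α).toMonoidHom

/-- `π(α,V)`: the subgroup of `π₁(X,x₀)` generated by classes `[α∗β∗ᾱ]`
with `β` a loop at `α(1)` lying in `V`. -/
def piSub {x₀ x : X} (α : Path x₀ x) (V : Set X) : Subgroup (FundamentalGroup X x₀) :=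
  Subgroup.closure
    {g | ∃ β : Path x x, (∀ t, β t ∈ V) ∧ g = loopClass ((α.trans β).trans α.symm)}

/-- `i₍#₎π₁(V,x)`: the image in `π₁(X,x)` of the fundamental group of `V`. -/
def loopSubgroup (x : X) (V : Set X) : Subgroup (FundamentalGroup X x) :=
  Subgroup.closure {g | ∃ β : Path x x, (∀ t, β t ∈ V) ∧ g = loopClass β}

/-- `H` is locally quasinormal. -/
def LocallyQuasinormal {x₀ : X} (H : Subgroup (FundamentalGroup X x₀)) : Prop :=
  ∀ (x : X) (α : Path x₀ x) (U : Set X), IsOpen U → x ∈ U →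
    ∃ V : Set X, V ⊆ U ∧ IsOpen V ∧ x ∈ V ∧
      (H : Set (FundamentalGroup X x₀)) * (piSub α V : Set (FundamentalGroup X x₀)) =
        (piSub α V : Set (FundamentalGroup X x₀)) * (H : Set (FundamentalGroup X x₀))

/-- `X` is an `H`-SLT space at the basepoint of `H`. -/
def SLTAt {b : X} (H : Subgroup (FundamentalGroup X b)) : Prop :=
  ∀ (x : X) (α : Path b x) (U : Set X), IsOpen U → b ∈ U →
    ∃ V : Set X, IsOpen V ∧ x ∈ V ∧
      ∀ β : Path x x, (∀ t, β t ∈ V) →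
        loopClass ((α.trans β).trans α.symm) ∈
          (H : Set (FundamentalGroup X b)) * (loopSubgroup b U : Set (FundamentalGroup X b))

/-- `X` is an `H`-SLT space. -/
def IsHSLT {x₀ : X} (H : Subgroup (FundamentalGroup X x₀)) : Prop :=
  ∀ (x : X) (δ : Path x₀ x), SLTAt (conjSubgroup H δ)

/-- `X` is a strong `H`-SLT space at the basepoint of `H`. -/
def StrongSLTAt {b : X} (H : Subgroup (FundamentalGroup X b)) : Prop :=
  ∀ (x : X) (U : Set X), IsOpen U → b ∈ U →
    ∃ V : Set X, IsOpen V ∧ x ∈ V ∧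
      ∀ (α : Path b x) (β : Path x x), (∀ t, β t ∈ V) →
        loopClass ((α.trans β).trans α.symm) ∈
          (H : Set (FundamentalGroup X b)) * (loopSubgroup b U : Set (FundamentalGroup X b))

/-- `X` is a strong `H`-SLT space. -/
def IsStrongHSLT {x₀ : X} (H : Subgroup (FundamentalGroup X x₀)) : Prop :=
  ∀ (x : X) (δ : Path x₀ x), StrongSLTAt (conjSubgroup H δ)

/-- `X` is homotopically Hausdorff relative to `H`. -/
def HomotopicallyHausdorffRel {b : X} (H : Subgroup (FundamentalGroup X b)) : Prop :=
  ∀ (x : X) (α : Path b x) (g : FundamentalGroup X b), g ∉ H →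
    ∃ U : Set X, IsOpen U ∧ x ∈ U ∧
      ∀ β : Path x x, (∀ t, β t ∈ U) →
        ∀ h ∈ H, loopClass ((α.trans β).trans α.symm) ≠ h * g

/-- `X` is homotopically path Hausdorff relative to `H`. -/
def HomotopicallyPathHausdorffRel {b : X} (H : Subgroup (FundamentalGroup X b)) : Prop :=
  ∀ (x : X) (α β : Path b x), loopClass (α.trans β.symm) ∉ H →
    ∃ (n : ℕ), 0 < n ∧
    ∃ (t : Fin (n + 1) → unitInterval) (U : Fin n → Set X),
      StrictMono t ∧ t 0 = 0 ∧ t (Fin.last n) = 1 ∧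
      (∀ i : Fin n, IsOpen (U i) ∧ ∀ s ∈ Set.Icc (t i.castSucc) (t i.succ), α s ∈ U i) ∧
      ∀ γ : Path b x,
        (∀ i : Fin n, ∀ s ∈ Set.Icc (t i.castSucc) (t i.succ), γ s ∈ U i) →
        (∀ j : Fin (n + 1), γ (t j) = α (t j)) →
        loopClass (γ.trans β.symm) ∉ H

/-- The collection of paths starting at `b`, with free endpoint. -/
def PathsFrom (b : X) := Σ x : X, Path b x

/-- The relation identifying paths in the standard construction `X̃_H`. -/
def stdRel {b : X} (H : Subgroup (FundamentalGroup X b)) :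
    PathsFrom b → PathsFrom b → Prop :=
  fun p q => ∃ h : q.1 = p.1, loopClass (p.2.trans (h ▸ q.2).symm) ∈ H

/-- The standard construction `X̃_H`. -/
def StdConstr {b : X} (H : Subgroup (FundamentalGroup X b)) := Quot (stdRel H)

/-- The class `[α]_H` of a path in the standard construction. -/
def stdClass {b : X} (H : Subgroup (FundamentalGroup X b)) (p : PathsFrom b) :
    StdConstr H :=
  Quot.mk _ p

/-- The basic whisker neighborhood `N_H([α]_H, U)`. -/
def whiskerNbhd {b : X} (H : Subgroup (FundamentalGroup X b)) (p : PathsFrom b)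
    (U : Set X) : Set (StdConstr H) :=
  {z | ∃ (y : X) (δ : Path p.1 y), (∀ t, δ t ∈ U) ∧ z = stdClass H ⟨y, p.2.trans δ⟩}

/-- The whisker topology on the standard construction. -/
def whiskerTopology {b : X} (H : Subgroup (FundamentalGroup X b)) :
    TopologicalSpace (StdConstr H) :=
  TopologicalSpace.generateFrom
    {s | ∃ (p : PathsFrom b) (U : Set X), IsOpen U ∧ p.1 ∈ U ∧ s = whiskerNbhd H p U}

/-- The Spanier subgroup `π(𝒰, y)` of `π₁(X,y)` associated to a family `𝒰` of subsets. -/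
def spanier (y : X) (𝒰 : Set (Set X)) : Subgroup (FundamentalGroup X y) :=
  Subgroup.closure
    {g | ∃ (z : X) (γ : Path y z) (β : Path z z), (∃ U ∈ 𝒰, ∀ t, β t ∈ U) ∧
          g = loopClass ((γ.trans β).trans γ.symm)}

/-- An open cover of `X`. -/
def IsOpenCover (𝒰 : Set (Set X)) : Prop :=
  (∀ U ∈ 𝒰, IsOpen U) ∧ ⋃₀ 𝒰 = Set.univ

/-- The basic lasso neighborhood `N_H([α]_H, 𝒰, U)`. -/
def lassoNbhd {b : X} (H : Subgroup (FundamentalGroup X b)) (p : PathsFrom b)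
    (𝒰 : Set (Set X)) (U : Set X) : Set (StdConstr H) :=
  {z | ∃ (l : Path p.1 p.1) (y : X) (δ : Path p.1 y),
        loopClass l ∈ spanier p.1 𝒰 ∧ (∀ t, δ t ∈ U) ∧
        z = stdClass H ⟨y, (p.2.trans l).trans δ⟩}

/-- The lasso topology on the standard construction. -/
def lassoTopology {b : X} (H : Subgroup (FundamentalGroup X b)) :
    TopologicalSpace (StdConstr H) :=
  TopologicalSpace.generateFrom
    {s | ∃ (p : PathsFrom b) (𝒰 : Set (Set X)) (U : Set X),
          IsOpenCover 𝒰 ∧ U ∈ 𝒰 ∧ IsOpen U ∧ p.1 ∈ U ∧ s = lassoNbhd H p 𝒰 U}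

/-- The endpoint projection `p_H : X̃_H → X`. -/
def endPt {b : X} (H : Subgroup (FundamentalGroup X b)) : StdConstr H → X :=
  Quot.lift (fun p => p.1) (fun _ _ h => h.1.symm)

/-- The whisker topology on the fundamental group `π₁^{wh}(X,x)`. -/
def whiskerTopOnPi (x : X) : TopologicalSpace (FundamentalGroup X x) :=
  TopologicalSpace.generateFrom
    {s | ∃ (g : FundamentalGroup X x) (U : Set X), IsOpen U ∧ x ∈ U ∧
          s = {g' | ∃ β : Path x x, (∀ t, β t ∈ U) ∧ g' = g * loopClass β}}

/-- The quasitopological fundamental group topology `π₁^{qtop}(X,x)`: the quotient of the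
compact-open topology on the loop space. -/
def qTop (x : X) : TopologicalSpace (FundamentalGroup X x) :=
  TopologicalSpace.coinduced loopClass inferInstance

/-- A map `p : E → X` (with `E` carrying the topology `tE`) has the unique path
lifting property. -/
def UniquePathLifting {E : Type*} (tE : TopologicalSpace E) (p : E → X) : Prop :=
  letI := tE
  ∀ f g : C(unitInterval, E), (∀ t, p (f t) = p (g t)) → f 0 = g 0 → f = g

/-- The small loop subgroup `π₁ˢ(X,x)`. -/
def smallLoopSubgroup (x : X) : Subgroup (FundamentalGroup X x) :=
  ⨅ (U : Set X) (_ : IsOpen U) (_ : x ∈ U), loopSubgroup x U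

/-- The Spanier group `π₁^{sp}(X,x)`: the intersection of all Spanier subgroups. -/
def spanierGroup (x : X) : Subgroup (FundamentalGroup X x) :=
  ⨅ (𝒰 : Set (Set X)) (_ : IsOpenCover 𝒰), spanier x 𝒰

/-- The path Spanier subgroup `π̃(𝒱, x₀)` of a path open cover `𝒱`. -/
def pathSpanier {b : X} (𝒱 : PathsFrom b → Set X) : Subgroup (FundamentalGroup X b) :=
  Subgroup.closure
    {g | ∃ (p : PathsFrom b) (β : Path p.1 p.1), (∀ t, β t ∈ 𝒱 p) ∧
          g = loopClass ((p.2.trans β).trans p.2.symm)}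

end Paper
end
namespace Paper
variable {X : Type*} [TopologicalSpace X]


/- ======================= auxiliary infrastructure ======================= -/

noncomputable section
open scoped unitInterval

attribute [local instance] Path.Homotopic.setoid

/-- an element of the fundamental group as a morphism -/
def _root_.FundamentalGroup.hom {x : X} (g : FundamentalGroup X x) :
    FundamentalGroupoid.mk x ⟶ FundamentalGroupoid.mk x := g

lemma fg_ext {x : X} {g h : FundamentalGroup X x} (e : g.hom = h.hom) : g = h := e

/-- affine path in the unit interval from `u` to `v` -/
def affineMap (u v : unitInterval) : C(unitInterval, unitInterval) :=
  ⟨fun t => ⟨(1 - (t:ℝ)) * u + t * v, by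
      constructor
      · nlinarith [t.2.1, t.2.2, u.2.1, v.2.1]
      · nlinarith [t.2.1, t.2.2, u.2.1, u.2.2, v.2.1, v.2.2]⟩, by
    apply Continuous.subtype_mk
    fun_prop⟩

@[simp] lemma affineMap_zero (u v : unitInterval) : affineMap u v 0 = u := by
  simp [affineMap]

@[simp] lemma affineMap_one (u v : unitInterval) : affineMap u v 1 = v := by
  simp [affineMap]

lemma affineMap_coe (u v t : unitInterval) :
    (affineMap u v t : ℝ) = (1 - (t:ℝ)) * u + t * v := rfl

lemma affineMap_mem_Icc {u v : unitInterval} (h : u ≤ v) (t : unitInterval) :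
    affineMap u v t ∈ Set.Icc u v := by
  have hv : (u:ℝ) ≤ v := h
  constructor
  · show (u:ℝ) ≤ ((1 - (t:ℝ)) * u + t * v : ℝ)
    nlinarith [t.2.1, t.2.2]
  · show ((1 - (t:ℝ)) * u + t * v : ℝ) ≤ (v:ℝ)
    nlinarith [t.2.1, t.2.2]

lemma affineMap_mem_ball {u v w : unitInterval} {r : ℝ} (hu : u ∈ Metric.ball w r)
    (hv : v ∈ Metric.ball w r) (t : unitInterval) : affineMap u v t ∈ Metric.ball w r := by
  rw [Metric.mem_ball, Subtype.dist_eq, Real.dist_eq] at *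
  rw [affineMap_coe]
  have h1 : (1 - (t:ℝ)) * u + t * v - w = (1-(t:ℝ)) * (u - w) + t * (v - w) := by ring
  rw [h1]
  calc |(1-(t:ℝ)) * ((u:ℝ) - w) + t * ((v:ℝ) - w)|
      ≤ |(1-(t:ℝ)) * ((u:ℝ) - w)| + |(t:ℝ) * ((v:ℝ) - w)| := abs_add_le _ _
    _ = (1-(t:ℝ)) * |(u:ℝ) - w| + t * |(v:ℝ) - w| := by
        rw [abs_mul, abs_mul, abs_of_nonneg (by nlinarith [t.2.2] : (0:ℝ) ≤ 1 - t),
          abs_of_nonneg t.2.1]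
    _ < r := by
        rcases eq_or_lt_of_le t.2.2 with h2 | h2
        · rw [← h2]; nlinarith [abs_nonneg ((u:ℝ) - w)]
        · nlinarith [mul_lt_mul_of_pos_left hu (by linarith : (0:ℝ) < 1 - t),
            mul_le_mul_of_nonneg_left hv.le t.2.1]

/-- The segment of a path between parameters `u` and `v`. -/
def sg {x y : X} (γ : Path x y) (u v : unitInterval) : Path (γ u) (γ v) where
  toContinuousMap := γ.toContinuousMap.comp (affineMap u v)
  source' := by show γ (affineMap u v 0) = γ u; rw [affineMap_zero]
  target' := by show γ (affineMap u v 1) = γ v; rw [affineMap_one]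

@[simp] lemma sg_apply {x y : X} (γ : Path x y) (u v t : unitInterval) :
    sg γ u v t = γ (affineMap u v t) := rfl

/-- The initial segment, as a path from the source. -/
def sg0 {x y : X} (γ : Path x y) (u : unitInterval) : Path x (γ u) :=
  (sg γ 0 u).cast γ.source.symm rfl

@[simp] lemma sg0_apply {x y : X} (γ : Path x y) (u t : unitInterval) :
    sg0 γ u t = γ (affineMap 0 u t) := by
  show ((sg γ 0 u).cast γ.source.symm rfl) t = _
  rw [Path.cast_coe]
  rfl

/-- two-parameter affine interpolation between two reparametrizations -/
def affine2 (φ ψ : C(unitInterval, unitInterval)) :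
    C(unitInterval × unitInterval, unitInterval) :=
  ⟨fun st => affineMap (φ st.2) (ψ st.2) st.1, by
    apply Continuous.subtype_mk
    fun_prop⟩

/-- Master straight-line homotopy lemma: two reparametrizations of the same path by
maps with matching endpoints are homotopic. -/
lemma quot_eq_of_reparam {x y a b : X} (γ : Path x y) (φ ψ : C(unitInterval, unitInterval))
    (h0 : φ 0 = ψ 0) (h1 : φ 1 = ψ 1) (p q : Path a b)
    (hp : ∀ t, p t = γ (φ t)) (hq : ∀ t, q t = γ (ψ t)) :
    ((Path.Homotopic.Quotient.mk (p)) : Path.Homotopic.Quotient a b) = (Path.Homotopic.Quotient.mk (q)) := by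
  refine Quotient.sound ⟨{
    toFun := fun st => γ (affine2 φ ψ st)
    continuous_toFun := γ.continuous.comp (affine2 φ ψ).continuous
    map_zero_left := fun t => ?_
    map_one_left := fun t => ?_
    prop' := fun s t ht => ?_ }⟩
  · show γ (affineMap (φ t) (ψ t) 0) = p t
    rw [affineMap_zero, hp]
  · show γ (affineMap (φ t) (ψ t) 1) = q t
    rw [affineMap_one, hq]
  · rcases ht with h | h
    · subst h
      show γ (affineMap (φ 0) (ψ 0) s) = p 0
      rw [hp, h0]
      congr 1
      ext
      rw [affineMap_coe]; ring
    · simp only [Set.mem_singleton_iff] at h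
      subst h
      show γ (affineMap (φ 1) (ψ 1) s) = p 1
      rw [hp, h1]
      congr 1
      ext
      rw [affineMap_coe]; ring

/-- `trans` of two reparametrizations of `γ` is again homotopic to a reparametrization. -/
lemma quot_trans_reparam {x y : X} (γ : Path x y)
    (φ₁ φ₂ ψ : C(unitInterval, unitInterval)) (h : φ₁ 1 = φ₂ 0)
    (h0 : φ₁ 0 = ψ 0) (h1 : φ₂ 1 = ψ 1) {a b c : X} (p : Path a b) (q : Path b c)
    (r : Path a c) (hp : ∀ τ, p τ = γ (φ₁ τ)) (hq : ∀ τ, q τ = γ (φ₂ τ))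
    (hr : ∀ τ, r τ = γ (ψ τ)) :
    ((Path.Homotopic.Quotient.mk (p.trans q)) : Path.Homotopic.Quotient a c) = (Path.Homotopic.Quotient.mk (r)) := by
  set P₁ : Path (φ₁ 0) (φ₁ 1) := ⟨φ₁, rfl, rfl⟩ with hP₁
  set P₂ : Path (φ₁ 1) (φ₂ 1) := (⟨φ₂, rfl, rfl⟩ : Path (φ₂ 0) (φ₂ 1)).cast h rfl with hP₂
  set Φ : C(unitInterval, unitInterval) := (P₁.trans P₂).toContinuousMap with hΦ
  have hΦ0 : Φ 0 = ψ 0 := by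
    rw [← h0]
    exact (P₁.trans P₂).source
  have hΦ1 : Φ 1 = ψ 1 := by
    rw [← h1]
    exact (P₁.trans P₂).target
  apply quot_eq_of_reparam γ Φ ψ hΦ0 hΦ1 _ _ _ hr
  intro τ
  show (p.trans q) τ = γ ((P₁.trans P₂) τ)
  rw [Path.trans_apply, Path.trans_apply]
  split_ifs with hsplit
  · rw [hp]
    rfl
  · rw [hq]
    congr 1

lemma quot_symm_congr {x y : X} {p q : Path x y}
    (h : ((Path.Homotopic.Quotient.mk (p)) : Path.Homotopic.Quotient x y) = (Path.Homotopic.Quotient.mk (q))) :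
    ((Path.Homotopic.Quotient.mk (p.symm)) : Path.Homotopic.Quotient y x) = (Path.Homotopic.Quotient.mk (q.symm)) := by
  obtain ⟨F⟩ := Quotient.exact h
  exact Quotient.sound ⟨F.symm₂⟩

/-- `trans` and composition, `Quotient`-typed version for `simp`. -/
lemma quot_transQ {x y z : X} (p : Path x y) (q : Path y z) :
    ((Path.Homotopic.Quotient.mk (p.trans q)) : Path.Homotopic.Quotient x z) =
      @CategoryStruct.comp (FundamentalGroupoid X) _ (FundamentalGroupoid.mk x)
        (FundamentalGroupoid.mk y) (FundamentalGroupoid.mk z) (Path.Homotopic.Quotient.mk (p)) (Path.Homotopic.Quotient.mk (q)) := rfl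

lemma quot_symm_comp_self {x y : X} (p : Path x y) :
    @CategoryStruct.comp (FundamentalGroupoid X) _ (FundamentalGroupoid.mk y)
        (FundamentalGroupoid.mk x) (FundamentalGroupoid.mk y) (Path.Homotopic.Quotient.mk (p.symm)) (Path.Homotopic.Quotient.mk (p)) =
      𝟙 (FundamentalGroupoid.mk y) := by
  rw [← quot_transQ]
  exact Quotient.sound ⟨(Path.Homotopy.reflSymmTrans p).symm⟩

lemma quot_comp_symm_self {x y : X} (p : Path x y) :
    @CategoryStruct.comp (FundamentalGroupoid X) _ (FundamentalGroupoid.mk x)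
        (FundamentalGroupoid.mk y) (FundamentalGroupoid.mk x) (Path.Homotopic.Quotient.mk (p)) (Path.Homotopic.Quotient.mk (p.symm)) =
      𝟙 (FundamentalGroupoid.mk x) := by
  rw [← quot_transQ]
  exact Quotient.sound ⟨(Path.Homotopy.reflTransSymm p).symm⟩

lemma quot_symm_comp_self_assoc {x y : X} (p : Path x y) {Z : FundamentalGroupoid X}
    (f : FundamentalGroupoid.mk y ⟶ Z) :
    @CategoryStruct.comp (FundamentalGroupoid X) _ (FundamentalGroupoid.mk y)
        (FundamentalGroupoid.mk x) Z (Path.Homotopic.Quotient.mk (p.symm))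
      (@CategoryStruct.comp (FundamentalGroupoid X) _ (FundamentalGroupoid.mk x)
        (FundamentalGroupoid.mk y) Z (Path.Homotopic.Quotient.mk (p)) f) = f := by
  exact (Category.assoc _ _ _).symm.trans
    ((congrArg (· ≫ f) (quot_symm_comp_self p)).trans (Category.id_comp f))

lemma quot_comp_symm_self_assoc {x y : X} (p : Path x y) {Z : FundamentalGroupoid X}
    (f : FundamentalGroupoid.mk x ⟶ Z) :
    @CategoryStruct.comp (FundamentalGroupoid X) _ (FundamentalGroupoid.mk x)
        (FundamentalGroupoid.mk y) Z (Path.Homotopic.Quotient.mk (p))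
      (@CategoryStruct.comp (FundamentalGroupoid X) _ (FundamentalGroupoid.mk y)
        (FundamentalGroupoid.mk x) Z (Path.Homotopic.Quotient.mk (p.symm)) f) = f := by
  exact (Category.assoc _ _ _).symm.trans
    ((congrArg (· ≫ f) (quot_comp_symm_self p)).trans (Category.id_comp f))

lemma quot_castQ {x y x' y' : X} (p : Path x y) (hx : x' = x) (hy : y' = y) :
    ((Path.Homotopic.Quotient.mk (p.cast hx hy)) : Path.Homotopic.Quotient x' y') =
      @CategoryStruct.comp (FundamentalGroupoid X) _ (FundamentalGroupoid.mk x')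
        (FundamentalGroupoid.mk x) (FundamentalGroupoid.mk y')
        (eqToHom (congrArg FundamentalGroupoid.mk hx))
      (@CategoryStruct.comp (FundamentalGroupoid X) _ (FundamentalGroupoid.mk x)
        (FundamentalGroupoid.mk y) (FundamentalGroupoid.mk y') (Path.Homotopic.Quotient.mk (p))
        (eqToHom (congrArg FundamentalGroupoid.mk hy.symm))) := by
  subst hx; subst hy
  have h : p.cast rfl rfl = p := by
    ext τ
    rw [Path.cast_coe]
  rw [h]
  simp

/- ---- group-level lemmas ---- -/

lemma loopClass_hom {x : X} (p : Path x x) :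
    (loopClass p).hom = ((Path.Homotopic.Quotient.mk (p)) : FundamentalGroupoid.mk x ⟶ FundamentalGroupoid.mk x) := rfl

lemma fg_mul_hom {x : X} (g h : FundamentalGroup X x) : (g * h).hom = h.hom ≫ g.hom := rfl

lemma quot_trans {x y z : X} (p : Path x y) (q : Path y z) :
    ((Path.Homotopic.Quotient.mk (p.trans q)) : FundamentalGroupoid.mk x ⟶ FundamentalGroupoid.mk z) =
      @CategoryStruct.comp (FundamentalGroupoid X) _ (FundamentalGroupoid.mk x)
        (FundamentalGroupoid.mk y) (FundamentalGroupoid.mk z) (Path.Homotopic.Quotient.mk (p)) (Path.Homotopic.Quotient.mk (q)) := rfl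

lemma quot_symm {x y : X} (p : Path x y) :
    ((Path.Homotopic.Quotient.mk (p.symm)) : FundamentalGroupoid.mk y ⟶ FundamentalGroupoid.mk x) =
      @CategoryTheory.inv (FundamentalGroupoid X) _ (FundamentalGroupoid.mk x)
        (FundamentalGroupoid.mk y) ((Path.Homotopic.Quotient.mk (p)) : FundamentalGroupoid.mk x ⟶ FundamentalGroupoid.mk y)
        inferInstance := by
  rw [← CategoryTheory.Groupoid.inv_eq_inv]
  rfl

lemma quot_refl (x : X) :
    ((Path.Homotopic.Quotient.mk (Path.refl x)) : FundamentalGroupoid.mk x ⟶ FundamentalGroupoid.mk x) =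
      𝟙 (FundamentalGroupoid.mk x) := rfl

lemma fg_inv_hom {x : X} (g : FundamentalGroup X x) :
    (g⁻¹).hom = inv g.hom := by
  rw [← CategoryTheory.Groupoid.inv_eq_inv]
  rfl

lemma fg_one_hom {x : X} :
    ((1 : FundamentalGroup X x)).hom = 𝟙 (FundamentalGroupoid.mk x) := rfl

lemma quot_cast {x y x' y' : X} (p : Path x y) (hx : x' = x) (hy : y' = y) :
    ((Path.Homotopic.Quotient.mk (p.cast hx hy)) : FundamentalGroupoid.mk x' ⟶ FundamentalGroupoid.mk y') =
      eqToHom (congrArg FundamentalGroupoid.mk hx) ≫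
        ((Path.Homotopic.Quotient.mk (p)) : FundamentalGroupoid.mk x ⟶ FundamentalGroupoid.mk y) ≫
        eqToHom (congrArg FundamentalGroupoid.mk hy.symm) := by
  subst hx; subst hy
  have : p.cast rfl rfl = p := by
    ext τ
    rw [Path.cast_coe]
  rw [this]
  simp

lemma loopClass_eq_of_quot_eq {x : X} {p q : Path x x}
    (h : ((Path.Homotopic.Quotient.mk (p)) : Path.Homotopic.Quotient x x) = (Path.Homotopic.Quotient.mk (q))) :
    loopClass p = loopClass q := by
  unfold loopClass
  exact h

lemma loopClass_trans {x : X} (p q : Path x x) :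
    loopClass (p.trans q) = loopClass q * loopClass p := by
  apply fg_ext
  rw [loopClass_hom, fg_mul_hom, loopClass_hom, loopClass_hom, quot_trans]

lemma loopClass_symm {x : X} (p : Path x x) :
    loopClass (p.symm) = (loopClass p)⁻¹ := by
  apply fg_ext
  rw [loopClass_hom, quot_symm]
  exact (fg_inv_hom _).symm

lemma loopClass_refl (x : X) : loopClass (Path.refl x) = 1 := by
  apply fg_ext
  rw [loopClass_hom, quot_refl]
  rfl

/-- conjugating by `refl` does nothing -/
lemma loopClass_refl_conj {x : X} (l : Path x x) :
    loopClass (((Path.refl x).trans l).trans (Path.refl x).symm) = loopClass l := by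
  apply fg_ext
  rw [loopClass_hom, loopClass_hom, quot_trans, quot_trans, quot_symm, quot_refl]
  simp

/-- the key algebraic relation between three paths with the same endpoints -/
lemma loopClass_three {b y : X} (α β γ : Path b y) :
    loopClass (γ.trans β.symm) =
      loopClass (α.trans β.symm) * (loopClass (α.trans γ.symm))⁻¹ := by
  have key : loopClass (γ.trans β.symm) * loopClass (α.trans γ.symm) =
      loopClass (α.trans β.symm) := by
    apply fg_ext
    rw [fg_mul_hom, loopClass_hom, loopClass_hom, loopClass_hom, quot_trans, quot_trans,
      quot_trans, quot_symm, quot_symm]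
    simp
  exact eq_mul_inv_of_mul_eq key

lemma pathConj_hom {x₀ x : X} (α : Path x₀ x) (g : FundamentalGroup X x₀) :
    (pathConj α g).hom =
      inv ((Path.Homotopic.Quotient.mk (α)) : FundamentalGroupoid.mk x₀ ⟶ FundamentalGroupoid.mk x) ≫ g.hom ≫ (Path.Homotopic.Quotient.mk (α)) := by
  rw [← CategoryTheory.Groupoid.inv_eq_inv]
  rfl

lemma pathConj_conj {x₀ x : X} (α : Path x₀ x) (l : Path x x) :
    pathConj α (loopClass ((α.trans l).trans α.symm)) = loopClass l := by
  apply fg_ext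
  rw [pathConj_hom, loopClass_hom, loopClass_hom, quot_trans, quot_trans, quot_symm]
  simp

/-- the image of `piSub` under conjugation is the loop subgroup -/
lemma map_piSub {x₀ x : X} (α : Path x₀ x) (V : Set X) :
    (piSub α V).map (pathConj α).toMonoidHom = loopSubgroup x V := by
  unfold piSub loopSubgroup
  rw [MonoidHom.map_closure]
  congr 1
  ext g
  constructor
  · rintro ⟨-, ⟨β, hβ, rfl⟩, rfl⟩
    exact ⟨β, hβ, by simpa using pathConj_conj α β⟩
  · rintro ⟨β, hβ, rfl⟩
    exact ⟨loopClass ((α.trans β).trans α.symm), ⟨β, hβ, rfl⟩,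
      by simpa using pathConj_conj α β⟩

/-- every element of a loop subgroup is the class of an honest loop in `V` -/
lemma exists_loop_of_mem_loopSubgroup {x : X} {V : Set X} (hx : x ∈ V)
    {g : FundamentalGroup X x} (hg : g ∈ loopSubgroup x V) :
    ∃ l : Path x x, (∀ t, l t ∈ V) ∧ g = loopClass l := by
  induction hg using Subgroup.closure_induction with
  | mem g hgen => exact hgen
  | one => exact ⟨Path.refl x, fun t => hx, (loopClass_refl x).symm⟩
  | mul a b _ _ iha ihb =>
    obtain ⟨la, hla, rfl⟩ := iha
    obtain ⟨lb, hlb, rfl⟩ := ihb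
    refine ⟨lb.trans la, fun t => ?_, (loopClass_trans lb la).symm⟩
    rw [Path.trans_apply]
    split_ifs <;> [exact hlb _; exact hla _]
  | inv a _ iha =>
    obtain ⟨la, hla, rfl⟩ := iha
    exact ⟨la.symm, fun t => hla _, (loopClass_symm la).symm⟩

/-- transfer quasinormality along conjugation -/
lemma conj_mul_comm {x₀ x : X} (H : Subgroup (FundamentalGroup X x₀)) (α : Path x₀ x)
    (V : Set X)
    (h : (H : Set (FundamentalGroup X x₀)) * (piSub α V : Set (FundamentalGroup X x₀)) =
      (piSub α V : Set (FundamentalGroup X x₀)) * (H : Set (FundamentalGroup X x₀))) :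
    (conjSubgroup H α : Set (FundamentalGroup X x)) * (loopSubgroup x V : Set _) =
      (loopSubgroup x V : Set _) * (conjSubgroup H α : Set _) := by
  rw [← map_piSub α V]
  unfold conjSubgroup
  rw [Subgroup.coe_map, Subgroup.coe_map, ← Set.image_mul, ← Set.image_mul, h]

/- ---- set-multiplication helpers ---- -/

lemma trans_mem {a b c : X} {V : Set X} {p : Path a b} {q : Path b c}
    (hp : ∀ τ, p τ ∈ V) (hq : ∀ τ, q τ ∈ V) : ∀ τ, (p.trans q) τ ∈ V := by
  intro τ
  rw [Path.trans_apply]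
  split_ifs <;> [exact hp _; exact hq _]

lemma cast_mem {a b a' b' : X} {V : Set X} {p : Path a b} (hx : a' = a) (hy : b' = b)
    (hp : ∀ τ, p τ ∈ V) : ∀ τ, (p.cast hx hy) τ ∈ V := by
  intro τ
  rw [Path.cast_coe]
  exact hp τ

lemma mul_mem_mul_of_comm {G : Type*} [Group G] {H K : Subgroup G}
    (hswap : ((H : Set G) * (K : Set G)) = (K : Set G) * (H : Set G)) {a b : G}
    (ha : a ∈ (H : Set G) * (K : Set G)) (hb : b ∈ (H : Set G) * (K : Set G)) :
    a * b ∈ (H : Set G) * (K : Set G) := by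
  obtain ⟨h₁, hh₁, k₁, hk₁, rfl⟩ := Set.mem_mul.mp ha
  obtain ⟨h₂, hh₂, k₂, hk₂, rfl⟩ := Set.mem_mul.mp hb
  have hmem : k₁ * h₂ ∈ (K : Set G) * (H : Set G) := Set.mem_mul.mpr ⟨k₁, hk₁, h₂, hh₂, rfl⟩
  rw [← hswap] at hmem
  obtain ⟨h₃, hh₃, k₃, hk₃, heq⟩ := Set.mem_mul.mp hmem
  have hrw : h₁ * k₁ * (h₂ * k₂) = (h₁ * h₃) * (k₃ * k₂) := by
    rw [mul_assoc h₁ h₃ _, ← mul_assoc h₃ k₃ k₂, heq]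
    group
  rw [hrw]
  exact Set.mem_mul.mpr ⟨h₁ * h₃, mul_mem hh₁ hh₃, k₃ * k₂, mul_mem hk₃ hk₂, rfl⟩

lemma one_mem_mul {G : Type*} [Group G] {H K : Subgroup G} :
    (1 : G) ∈ (H : Set G) * (K : Set G) :=
  Set.mem_mul.mpr ⟨1, one_mem H, 1, one_mem K, mul_one 1⟩

end

/-- Corollary 3.5: if `X` is `H`-SLT and `H` is locally quasinormal, then for
every path `α` from `x₀`, h.H relative to `H_α` implies h.p.H relative to `H_α`. -/
theorem hH_implies_hpH_conj [PathConnectedSpace X] {x₀ : X}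
    (H : Subgroup (FundamentalGroup X x₀)) (hSLT : IsHSLT H)
    (hq : LocallyQuasinormal H) :
    ∀ (x : X) (α : Path x₀ x),
      HomotopicallyHausdorffRel (conjSubgroup H α) →
        HomotopicallyPathHausdorffRel (conjSubgroup H α) := by
  intro b α₀ hH
  intro y α β hg
  -- Step 1: relatively homotopically Hausdorff gives `U₀`
  obtain ⟨U₀, hU₀open, hbU₀, hU₀⟩ := hH b (Path.refl b) _ hg
  have hU₀' : ∀ l : Path b b, (∀ τ, l τ ∈ U₀) → ∀ h ∈ conjSubgroup H α₀,
      loopClass l ≠ h * loopClass (α.trans β.symm) := by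
    intro l hl h hh
    have := hU₀ l hl h hh
    rwa [loopClass_refl_conj] at this
  -- Step 2: local quasinormality gives `W ⊆ U₀`
  obtain ⟨W, hWU₀, hWopen, hbW, hswap₀⟩ := hq b α₀ U₀ hU₀open hbU₀
  have hswap : (conjSubgroup H α₀ : Set (FundamentalGroup X b)) * (loopSubgroup b W : Set _) =
      (loopSubgroup b W : Set _) * (conjSubgroup H α₀ : Set _) :=
    conj_mul_comm H α₀ W hswap₀
  -- Step 3: SLT neighborhoods along `α`
  have hS : SLTAt (conjSubgroup H α₀) := hSLT b α₀
  have hV : ∀ s : unitInterval, ∃ V : Set X, IsOpen V ∧ α s ∈ V ∧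
      ∀ l : Path (α s) (α s), (∀ τ, l τ ∈ V) →
        loopClass (((sg0 α s).trans l).trans (sg0 α s).symm) ∈
          (conjSubgroup H α₀ : Set (FundamentalGroup X b)) * (loopSubgroup b W : Set _) := by
    intro s
    obtain ⟨V, hVo, hVm, hVp⟩ := hS (α s) (sg0 α s) W hWopen hbW
    exact ⟨V, hVo, hVm, hVp⟩
  choose V hVopen hαV hP using hV
  -- Step 4: continuity gives balls mapped into `V`
  have hball : ∀ s : unitInterval, ∃ ε : ℝ, 0 < ε ∧ Metric.ball s ε ⊆ α ⁻¹' (V s) := by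
    intro s
    have hnhds : α ⁻¹' (V s) ∈ nhds s :=
      α.continuous.continuousAt.preimage_mem_nhds ((hVopen s).mem_nhds (hαV s))
    obtain ⟨ε, hε, hsub⟩ := Metric.mem_nhds_iff.mp hnhds
    exact ⟨ε, hε, hsub⟩
  choose ε hεpos hεball using hball
  -- Step 5: Lebesgue number
  obtain ⟨δ, hδpos, hδ⟩ := lebesgue_number_lemma_of_metric
    (isCompact_univ (X := unitInterval)) (fun s => Metric.isOpen_ball)
    (fun u _ => Set.mem_iUnion.mpr ⟨u, Metric.mem_ball_self (hεpos u)⟩)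
  -- Step 6: choose a mesh size `1/n < δ`
  obtain ⟨N₀, hN₀⟩ := exists_nat_one_div_lt hδpos
  have hnR : (0:ℝ) < (N₀ + 1 : ℕ) := by positivity
  have hδn : 1 / ((N₀ + 1 : ℕ):ℝ) < δ := by push_cast; exact hN₀
  -- Step 7: the partition
  have htmem : ∀ i : Fin (N₀ + 1 + 1), ((i:ℝ)/((N₀ + 1 : ℕ):ℝ)) ∈ Set.Icc (0:ℝ) 1 := by
    intro i
    constructor
    · positivity
    · rw [div_le_one hnR]
      exact_mod_cast Fin.is_le i
  set t : Fin (N₀ + 1 + 1) → unitInterval := fun i => ⟨(i:ℝ)/((N₀ + 1 : ℕ):ℝ), htmem i⟩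
    with htdef
  have htcoe : ∀ i, (t i : ℝ) = (i:ℝ)/((N₀ + 1 : ℕ):ℝ) := fun i => rfl
  have htmono : StrictMono t := by
    intro i j hij
    show (t i : ℝ) < (t j : ℝ)
    rw [htcoe, htcoe, div_lt_div_iff_of_pos_right hnR]
    exact_mod_cast hij
  have ht0 : t 0 = 0 := by
    ext
    rw [htcoe]
    simp
  have ht1 : t (Fin.last (N₀ + 1)) = 1 := by
    ext
    rw [htcoe]
    have hne : ((N₀ + 1 : ℕ):ℝ) ≠ 0 := hnR.ne'
    simp [Fin.last]
    field_simp
    exact Nat.cast_add_one_ne_zero N₀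
  -- Step 8: assign a cover element to each subinterval
  have hchoose : ∀ i : Fin (N₀ + 1), ∃ s : unitInterval,
      Metric.ball (t i.castSucc) δ ⊆ Metric.ball s (ε s) :=
    fun i => hδ (t i.castSucc) (Set.mem_univ _)
  choose sp hsp using hchoose
  have hIccball : ∀ i : Fin (N₀ + 1),
      Set.Icc (t i.castSucc) (t i.succ) ⊆ Metric.ball (sp i) (ε (sp i)) := by
    intro i τ hτ
    apply hsp i
    rw [Metric.mem_ball, Subtype.dist_eq, Real.dist_eq]
    have h1 : (t i.castSucc : ℝ) ≤ τ := hτ.1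
    have h2 : (τ:ℝ) ≤ t i.succ := hτ.2
    have h3 : (t i.succ : ℝ) - t i.castSucc = 1 / ((N₀ + 1 : ℕ):ℝ) := by
      rw [htcoe, htcoe, Fin.coe_castSucc, Fin.val_succ]
      push_cast
      field_simp
      ring
    rw [abs_of_nonneg (by linarith)]
    linarith
  have hsub : ∀ i : Fin (N₀ + 1), ∀ τ ∈ Set.Icc (t i.castSucc) (t i.succ),
      α τ ∈ V (sp i) := fun i τ hτ => hεball (sp i) (hIccball i hτ)
  -- provide the data
  refine ⟨N₀ + 1, Nat.succ_pos _, t, fun i => V (sp i), htmono, ht0, ht1,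
    fun i => ⟨hVopen _, hsub i⟩, ?_⟩
  intro γ hγU hγα
  intro hcon
  -- the discrepancy loops
  have claim : ∀ j : Fin (N₀ + 1 + 1),
      loopClass ((sg0 α (t j)).trans (((sg0 γ (t j)).cast rfl (hγα j).symm).symm)) ∈
        (conjSubgroup H α₀ : Set (FundamentalGroup X b)) * (loopSubgroup b W : Set _) := by
    intro j
    induction j using Fin.induction with
    | zero =>
      have hb0 : α (t 0) = b := by rw [ht0]; exact α.source
      have e1 : ((Path.Homotopic.Quotient.mk (sg0 α (t 0))) : Path.Homotopic.Quotient b (α (t 0))) =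
          (Path.Homotopic.Quotient.mk ((Path.refl b).cast rfl hb0)) := by
        apply quot_eq_of_reparam α (affineMap 0 (t 0)) (ContinuousMap.const _ 0)
          (by simp) (by rw [affineMap_one]; exact ht0)
        · intro τ; simp
        · intro τ
          rw [Path.cast_coe]
          show b = α ((ContinuousMap.const _ (0:unitInterval)) τ)
          exact α.source.symm
      have e2 : ((Path.Homotopic.Quotient.mk ((sg0 γ (t 0)).cast rfl (hγα 0).symm)) :
            Path.Homotopic.Quotient b (α (t 0))) = (Path.Homotopic.Quotient.mk ((Path.refl b).cast rfl hb0)) := by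
        apply quot_eq_of_reparam γ (affineMap 0 (t 0)) (ContinuousMap.const _ 0)
          (by simp) (by rw [affineMap_one]; exact ht0)
        · intro τ; rw [Path.cast_coe]; simp
        · intro τ
          rw [Path.cast_coe]
          show b = γ ((ContinuousMap.const _ (0:unitInterval)) τ)
          exact γ.source.symm
      have hone : loopClass
          ((sg0 α (t 0)).trans (((sg0 γ (t 0)).cast rfl (hγα 0).symm).symm)) = 1 := by
        apply fg_ext
        rw [loopClass_hom, fg_one_hom, quot_transQ, e1, quot_symm_congr e2]
        exact quot_comp_symm_self _
      rw [hone]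
      exact one_mem_mul
    | succ i ih =>
      -- abbreviations
      have hu : α (t i.castSucc) = γ (t i.castSucc) := (hγα i.castSucc).symm
      have hv : α (t i.succ) = γ (t i.succ) := (hγα i.succ).symm
      have huv : t i.castSucc ≤ t i.succ := (htmono (Fin.castSucc_lt_succ (i := i))).le
      -- the four little paths
      have hamem : ∀ τ, (sg α (t i.castSucc) (t i.succ)) τ ∈ V (sp i) := by
        intro τ
        exact hsub i _ (affineMap_mem_Icc huv τ)
      have hgmem : ∀ τ, ((sg γ (t i.castSucc) (t i.succ)).cast hu hv) τ ∈ V (sp i) := by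
        intro τ
        rw [Path.cast_coe]
        exact hγU i _ (affineMap_mem_Icc huv τ)
      have hcmem : ∀ τ, (sg α (sp i) (t i.castSucc)) τ ∈ V (sp i) := by
        intro τ
        apply hεball (sp i)
        exact affineMap_mem_ball (Metric.mem_ball_self (hεpos (sp i)))
          (hIccball i ⟨le_refl _, huv⟩) τ
      -- the SLT loop
      have hl'mem : ∀ τ,
          (((sg α (sp i) (t i.castSucc)).trans
            ((sg α (t i.castSucc) (t i.succ)).trans
              ((sg γ (t i.castSucc) (t i.succ)).cast hu hv).symm)).trans
            (sg α (sp i) (t i.castSucc)).symm) τ ∈ V (sp i) := by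
        apply trans_mem (trans_mem hcmem (trans_mem hamem (fun τ => hgmem _)))
        intro τ
        exact hcmem _
      have hE := hP (sp i) _ hl'mem
      -- quotient-level decompositions
      have qA' : ((Path.Homotopic.Quotient.mk (sg0 α (t i.succ))) :
            Path.Homotopic.Quotient b (α (t i.succ))) =
          @CategoryStruct.comp (FundamentalGroupoid X) _ (FundamentalGroupoid.mk b)
            (FundamentalGroupoid.mk (α (t i.castSucc)))
            (FundamentalGroupoid.mk (α (t i.succ)))
            (Path.Homotopic.Quotient.mk (sg0 α (t i.castSucc))) (Path.Homotopic.Quotient.mk (sg α (t i.castSucc) (t i.succ))) := by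
        rw [← quot_transQ]
        refine (quot_trans_reparam α (affineMap 0 (t i.castSucc))
          (affineMap (t i.castSucc) (t i.succ)) (affineMap 0 (t i.succ))
          (by simp) (by simp) (by simp) _ _ _ ?_ ?_ ?_).symm
        · intro τ; simp
        · intro τ; rfl
        · intro τ; simp
      have qG' : ((Path.Homotopic.Quotient.mk ((sg0 γ (t i.succ)).cast rfl (hγα i.succ).symm)) :
            Path.Homotopic.Quotient b (α (t i.succ))) =
          ((Path.Homotopic.Quotient.mk (((sg0 γ (t i.castSucc)).cast rfl (hγα i.castSucc).symm).trans
            ((sg γ (t i.castSucc) (t i.succ)).cast hu hv))) :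
            Path.Homotopic.Quotient b (α (t i.succ))) := by
        refine (quot_trans_reparam γ (affineMap 0 (t i.castSucc))
          (affineMap (t i.castSucc) (t i.succ)) (affineMap 0 (t i.succ))
          (by simp) (by simp) (by simp) _ _ _ ?_ ?_ ?_).symm
        · intro τ; rw [Path.cast_coe]; simp
        · intro τ; rw [Path.cast_coe]; rfl
        · intro τ; rw [Path.cast_coe]; simp
      have qGs' : ((Path.Homotopic.Quotient.mk (((sg0 γ (t i.succ)).cast rfl (hγα i.succ).symm).symm)) :
            Path.Homotopic.Quotient (α (t i.succ)) b) =
          @CategoryStruct.comp (FundamentalGroupoid X) _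
            (FundamentalGroupoid.mk (α (t i.succ)))
            (FundamentalGroupoid.mk (α (t i.castSucc)))
            (FundamentalGroupoid.mk b)
            (Path.Homotopic.Quotient.mk (((sg γ (t i.castSucc) (t i.succ)).cast hu hv).symm))
            (Path.Homotopic.Quotient.mk (((sg0 γ (t i.castSucc)).cast rfl (hγα i.castSucc).symm).symm)) := by
        rw [quot_symm_congr qG', Path.trans_symm, quot_transQ]
      have qAs' : ((Path.Homotopic.Quotient.mk (sg0 α (t i.castSucc))) :
            Path.Homotopic.Quotient b (α (t i.castSucc))) =
          @CategoryStruct.comp (FundamentalGroupoid X) _ (FundamentalGroupoid.mk b)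
            (FundamentalGroupoid.mk (α (sp i)))
            (FundamentalGroupoid.mk (α (t i.castSucc)))
            (Path.Homotopic.Quotient.mk (sg0 α (sp i))) (Path.Homotopic.Quotient.mk (sg α (sp i) (t i.castSucc))) := by
        rw [← quot_transQ]
        refine (quot_trans_reparam α (affineMap 0 (sp i))
          (affineMap (sp i) (t i.castSucc)) (affineMap 0 (t i.castSucc))
          (by simp) (by simp) (by simp) _ _ _ ?_ ?_ ?_).symm
        · intro τ; simp
        · intro τ; rfl
        · intro τ; simp
      -- the group-level step
      have hstep : loopClass
          ((sg0 α (t i.succ)).trans (((sg0 γ (t i.succ)).cast rfl (hγα i.succ).symm).symm)) =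
          loopClass ((sg0 α (t i.castSucc)).trans
            (((sg0 γ (t i.castSucc)).cast rfl (hγα i.castSucc).symm).symm)) *
          loopClass (((sg0 α (sp i)).trans
            (((sg α (sp i) (t i.castSucc)).trans
              ((sg α (t i.castSucc) (t i.succ)).trans
                ((sg γ (t i.castSucc) (t i.succ)).cast hu hv).symm)).trans
              (sg α (sp i) (t i.castSucc)).symm)).trans (sg0 α (sp i)).symm) := by
        apply fg_ext
        rw [fg_mul_hom]
        simp only [loopClass_hom]
        simp only [quot_transQ]
        rw [qA', qGs', qAs']
        simp only [Category.assoc, quot_symm_comp_self_assoc, quot_comp_symm_self_assoc,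
          quot_symm_comp_self, quot_comp_symm_self, Category.id_comp, Category.comp_id]
      rw [hstep]
      exact mul_mem_mul_of_comm hswap ih hE
  -- identify the last discrepancy loop
  have hlast := claim (Fin.last (N₀ + 1))
  have hy1 : α (t (Fin.last (N₀ + 1))) = y := by rw [ht1]; exact α.target
  have qA1 : ((Path.Homotopic.Quotient.mk (sg0 α (t (Fin.last (N₀ + 1))))) :
        Path.Homotopic.Quotient b (α (t (Fin.last (N₀ + 1))))) = (Path.Homotopic.Quotient.mk (α.cast rfl hy1)) := by
    apply quot_eq_of_reparam α (affineMap 0 (t (Fin.last (N₀ + 1)))) (ContinuousMap.id _)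
      (by simp) (by rw [affineMap_one, ht1]; rfl)
    · intro τ; simp
    · intro τ; rw [Path.cast_coe]; rfl
  have qG1 : ((Path.Homotopic.Quotient.mk ((sg0 γ (t (Fin.last (N₀ + 1)))).cast rfl (hγα (Fin.last (N₀ + 1))).symm)) :
        Path.Homotopic.Quotient b (α (t (Fin.last (N₀ + 1))))) = (Path.Homotopic.Quotient.mk (γ.cast rfl hy1)) := by
    apply quot_eq_of_reparam γ (affineMap 0 (t (Fin.last (N₀ + 1)))) (ContinuousMap.id _)
      (by simp) (by rw [affineMap_one, ht1]; rfl)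
    · intro τ; rw [Path.cast_coe]; simp
    · intro τ; rw [Path.cast_coe]; rfl
  have hD : loopClass (α.trans γ.symm) ∈
      (conjSubgroup H α₀ : Set (FundamentalGroup X b)) * (loopSubgroup b W : Set _) := by
    have heq : loopClass ((sg0 α (t (Fin.last (N₀ + 1)))).trans
        (((sg0 γ (t (Fin.last (N₀ + 1)))).cast rfl
          (hγα (Fin.last (N₀ + 1))).symm).symm)) = loopClass (α.trans γ.symm) := by
      apply fg_ext
      simp only [loopClass_hom]
      rw [quot_transQ, quot_transQ, qA1, quot_symm_congr qG1, ← Path.cast_symm,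
        quot_castQ, quot_castQ]
      simp
    rw [← heq]
    exact hlast
  -- derive the contradiction
  obtain ⟨h₁, hh₁, k, hk, hDk⟩ := Set.mem_mul.mp hD
  obtain ⟨l, hlW, rfl⟩ := exists_loop_of_mem_loopSubgroup hbW (SetLike.mem_coe.mp hk)
  have hrel : loopClass (γ.trans β.symm) =
      loopClass (α.trans β.symm) * (loopClass (α.trans γ.symm))⁻¹ :=
    loopClass_three α β γ
  have hll : loopClass l = (h₁⁻¹ * (loopClass (γ.trans β.symm))⁻¹) *
      loopClass (α.trans β.symm) := by
    have hD2 : loopClass (α.trans γ.symm) =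
        (loopClass (γ.trans β.symm))⁻¹ * loopClass (α.trans β.symm) := by
      rw [hrel]
      group
    rw [← hDk] at hD2
    rw [mul_assoc]
    rw [← hD2]
    group
  exact hU₀' l (fun τ => hWU₀ (hlW τ))
    (h₁⁻¹ * (loopClass (γ.trans β.symm))⁻¹)
    (mul_mem (inv_mem (SetLike.mem_coe.mp hh₁)) (inv_mem hcon)) hll


end Paper
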